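/- Let d ≥ 4 and let ρ = (ρ₁,…,ρ_{d−1}) be any vector with each ρ_i ∈ (−1,1)∖{0}. Then the star minimizes the approximate error exponent: for every tree T on d vertices, every arrangement π of ρ on T, and every arrangement σ of ρ on the star on d vertices, K̃(star, σ, ρ) ≤ K̃(T, π, ρ). -/

import Mathlib

noncomputable def Jt (a b : ℝ) : ℝ :=
  ((1 / 2) * Real.log ((1 - b ^ 2) / (1 - a ^ 2))) ^ 2 /
    (2 * (b ^ 4 + b ^ 2) / (1 - b ^ 2) ^ 2 + 2 * (a ^ 4 + a ^ 2) / (1 - a ^ 2) ^ 2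
      - 4 * b ^ 2 * (a ^ 2 + 1) / ((1 - b ^ 2) * (1 - a ^ 2)))


noncomputable def Bden (x y : ℝ) : ℝ :=
  (2*y^2+2*y)/(1-y)^2 + (2*x^2+2*x)/(1-x)^2 - (4*x+4)*y/((1-y)*(1-x))

noncomputable def DB (x y : ℝ) : ℝ :=
  (6*y+2)/(1-y)^3 - (4*x+4)/((1-x)*(1-y)^2)

lemma hasDerivAt_Bden (x y : ℝ) (hx : (1:ℝ) - x ≠ 0) (hy : (1:ℝ) - y ≠ 0) :
    HasDerivAt (fun z => Bden x z) (DB x y) y := by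
  have h1 : HasDerivAt (fun z : ℝ => 1 - z) (-1) y := (hasDerivAt_id y).const_sub 1
  have hsq : HasDerivAt (fun z : ℝ => (1 - z)^2) (2 * (1-y)^1 * (-1)) y := h1.pow 2
  have hnum : HasDerivAt (fun z : ℝ => 2*z^2+2*z) (2*(2*y^1)+2) y := by
    have := ((hasDerivAt_pow 2 y).const_mul 2).add ((hasDerivAt_id y).const_mul 2)
    have h' : HasDerivAt ((fun y : ℝ => 2 * y ^ 2) + fun y => 2 * y) (2 * (2 * y) + 2) y := by
      simpa using this
    rw [pow_one]; exact h'
  have ht1 := hnum.div hsq (pow_ne_zero 2 hy)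
  have ht3 : HasDerivAt (fun z : ℝ => (4*x+4)*z/((1-z)*(1-x))) 
      (((4*x+4) * ((1-y)*(1-x)) - (4*x+4)*y * ((-1)*(1-x))) / ((1-y)*(1-x))^2) y := by
    have hd : HasDerivAt (fun z : ℝ => (1-z)*(1-x)) ((-1)*(1-x)) y := h1.mul_const (1-x)
    have hn : HasDerivAt (fun z : ℝ => (4*x+4)*z) (4*x+4) y := by
      simpa using (hasDerivAt_id y).const_mul (4*x+4)
    exact hn.div hd (mul_ne_zero hy hx)
  have := (ht1.add_const ((2*x^2+2*x)/(1-x)^2)).sub ht3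
  refine this.congr_deriv ?_
  unfold DB
  field_simp
  ring

lemma DB_neg (x y : ℝ) (hy : 0 < y) (hyx : y < x) (hx : x < 1) : DB x y < 0 := by
  have h1 : (0:ℝ) < 1 - x := by linarith
  have h2 : (0:ℝ) < 1 - y := by linarith
  have key : DB x y = -(2*(4*(x-y)+(1-x)*(1-y)))/((1-x)*(1-y)^3) := by
    unfold DB; field_simp; ring
  rw [key]
  apply div_neg_of_neg_of_pos
  · nlinarith
  · positivity

lemma poly_key (x y : ℝ) (hy : 0 < y) (hyx : y < x) (hx : x < 1) :
    ((x-y)/(1-x)) * DB x y + 2 * Bden x y / (1-y) = 2*(x-y)/((1-x)*(1-y)^2) := by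
  have h1 : (1:ℝ) - x ≠ 0 := by intro h; nlinarith
  have h2 : (1:ℝ) - y ≠ 0 := by intro h; nlinarith
  unfold DB Bden; field_simp; ring

noncomputable def gJ (x y : ℝ) : ℝ :=
  ((1/2) * (Real.log (1-y) - Real.log (1-x)))^2 / Bden x y

lemma Bden_eq' (x y : ℝ) (hx : x ≠ 1) (hy : y ≠ 1) :
    Bden x y = 2*(x-y)*(2*(x-y)+(1-x)*(1-y)) / ((1-x)^2*(1-y)^2) := by
  have h1 : (1:ℝ) - x ≠ 0 := by intro h; apply hx; linarith
  have h2 : (1:ℝ) - y ≠ 0 := by intro h; apply hy; linarith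
  unfold Bden; field_simp; ring

lemma Bden_pos' (x y : ℝ) (hy : 0 < y) (hyx : y < x) (hx : x < 1) : 0 < Bden x y := by
  rw [Bden_eq' x y (by linarith) (by linarith)]
  have h1 : (0:ℝ) < 1 - x := by linarith
  have h2 : (0:ℝ) < 1 - y := by linarith
  have h3 : (0:ℝ) < x - y := by linarith
  positivity

lemma hasDerivAt_gJ (x y : ℝ) (hy : 0 < y) (hyx : y < x) (hx : x < 1) :
    HasDerivAt (gJ x)
      ((2 * ((1/2) * (Real.log (1-y) - Real.log (1-x)))^1 * ((1/2)*(-1/(1-y))) * Bden x y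
        - ((1/2) * (Real.log (1-y) - Real.log (1-x)))^2 * DB x y) / (Bden x y)^2) y := by
  have h2 : (1:ℝ) - y ≠ 0 := by intro h; nlinarith
  have hx' : (1:ℝ) - x ≠ 0 := by intro h; nlinarith
  have h1 : HasDerivAt (fun z : ℝ => 1 - z) (-1) y := (hasDerivAt_id y).const_sub 1
  have hlog : HasDerivAt (fun z : ℝ => Real.log (1-z)) (-1/(1-y)) y := h1.log h2
  have hsub := hlog.sub_const (Real.log (1-x))
  have hmul := hsub.const_mul (1/2 : ℝ)
  have hpow := hmul.pow 2
  have hB := hasDerivAt_Bden x y hx' h2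
  have := hpow.div hB (ne_of_gt (Bden_pos' x y hy hyx hx))
  refine this.congr_deriv ?_
  norm_num

lemma deriv_gJ_nonpos (x y : ℝ) (hy : 0 < y) (hyx : y < x) (hx : x < 1) :
    deriv (gJ x) y ≤ 0 := by
  rw [(hasDerivAt_gJ x y hy hyx hx).deriv]
  set L := Real.log (1-y) - Real.log (1-x) with hL
  have hp : (0:ℝ) < 1 - x := by linarith
  have hq : (0:ℝ) < 1 - y := by linarith
  have hL0 : 0 ≤ L := by
    rw [hL]; have := Real.log_le_log (by linarith : (0:ℝ) < 1 - x) (by linarith : 1-x ≤ 1-y)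
    linarith
  have hLle : L ≤ (x - y)/(1-x) := by
    have h := Real.log_le_sub_one_of_pos (div_pos hq hp)
    rw [Real.log_div (by linarith) (by linarith)] at h
    have : (1-y)/(1-x) - 1 = (x-y)/(1-x) := by field_simp; ring
    rw [hL]; linarith
  have hDB := DB_neg x y hy hyx hx
  have hB := Bden_pos' x y hy hyx hx
  have hpoly := poly_key x y hy hyx hx
  apply div_nonpos_of_nonpos_of_nonneg _ (sq_nonneg _)
  -- key: L * DB x y ≥ -2 * Bden x y / (1-y)
  have s1 : ((x-y)/(1-x)) * DB x y ≤ L * DB x y := by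
    exact mul_le_mul_of_nonpos_right hLle hDB.le
  have s2 : -(2 * Bden x y / (1-y)) ≤ L * DB x y := by
    have hpos : (0:ℝ) ≤ 2*(x-y)/((1-x)*(1-y)^2) :=
      div_nonneg (by linarith) (mul_nonneg hp.le (sq_nonneg (1-y)))
    nlinarith
  -- multiply by L/4 ≥ 0
  have s3 : (L/4) * (-(2 * Bden x y / (1-y))) ≤ (L/4) * (L * DB x y) :=
    mul_le_mul_of_nonneg_left s2 (by linarith)
  have e1 : 2 * ((1/2) * L)^1 * ((1/2)*(-1/(1-y))) * Bden x y - ((1/2) * L)^2 * DB x y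
      = (L/4) * (-(2 * Bden x y / (1-y))) - (L/4) * (L * DB x y) := by ring
  rw [e1]; linarith

lemma gJ_anti (x y1 y2 : ℝ) (h2 : 0 < y2) (h21 : y2 ≤ y1) (h1x : y1 < x) (hx : x < 1) :
    gJ x y1 ≤ gJ x y2 := by
  have hss : Set.Icc y2 y1 ⊆ Set.Ioo 0 x := fun z hz =>
    ⟨lt_of_lt_of_le h2 hz.1, lt_of_le_of_lt hz.2 h1x⟩
  have H : AntitoneOn (gJ x) (Set.Icc y2 y1) := by
    apply antitoneOn_of_deriv_nonpos (convex_Icc _ _)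
    · intro z hz
      have hz' := hss hz
      exact (hasDerivAt_gJ x z hz'.1 hz'.2 hx).differentiableAt.continuousAt.continuousWithinAt
    · intro z hz
      rw [interior_Icc] at hz
      have hz' := hss (Set.Ioo_subset_Icc_self hz)
      exact (hasDerivAt_gJ x z hz'.1 hz'.2 hx).differentiableAt.differentiableWithinAt
    · intro z hz
      rw [interior_Icc] at hz
      have hz' := hss (Set.Ioo_subset_Icc_self hz)
      exact deriv_gJ_nonpos x z hz'.1 hz'.2 hx
  exact H ⟨le_rfl, h21⟩ ⟨h21, le_rfl⟩ h21
lemma Jt_eq_g (a b : ℝ) (ha : a^2 < 1) (hb : b^2 < 1) : Jt a b = gJ (a^2) (b^2) := by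
  have h1 : (0:ℝ) < 1 - a^2 := by linarith
  have h2 : (0:ℝ) < 1 - b^2 := by linarith
  unfold Jt gJ Bden
  rw [Real.log_div (by linarith) (by linarith)]
  ring_nf

lemma Jt_nonneg (a b : ℝ) (h1 : b^2 < a^2) (h2 : a^2 < 1) (h3 : 0 < b^2) :
    0 ≤ Jt a b := by
  rw [Jt_eq_g a b h2 (by linarith)]
  exact div_nonneg (sq_nonneg _) (Bden_pos' _ _ h3 h1 h2).le

lemma Jt_anti (a b1 b2 : ℝ) (h0 : 0 < b2^2) (h21 : b2^2 ≤ b1^2) (h1 : b1^2 < a^2)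
    (ha : a^2 < 1) : Jt a b1 ≤ Jt a b2 := by
  rw [Jt_eq_g a b1 ha (by nlinarith), Jt_eq_g a b2 ha (by nlinarith)]
  exact gJ_anti (a^2) (b1^2) (b2^2) h0 h21 h1 ha


-- list helpers
lemma list_prod_bound : ∀ (l : List ℝ), (∀ z ∈ l, |z| ≤ 1 ∧ z ≠ 0) → |l.prod| ≤ 1 ∧ l.prod ≠ 0 := by
  intro l
  induction l with
  | nil => intro _; simp
  | cons a t ih =>
    intro h
    have ha := h a (by simp)
    have ht := ih (fun z hz => h z (by simp [hz]))
    rw [List.prod_cons]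
    constructor
    · rw [abs_mul]
      calc |a| * |t.prod| ≤ 1 * 1 := by
            apply mul_le_mul ha.1 ht.1 (abs_nonneg _) zero_le_one
        _ = 1 := by ring
    · exact mul_ne_zero ha.2 ht.2

lemma exists_ne_mem_of_nodup {α : Type*} (l : List α) (h : l.Nodup) (hl : 2 ≤ l.length)
    {e : α} (he : e ∈ l) : ∃ f ∈ l, f ≠ e := by
  match l, h, hl with
  | a :: b :: t, h, _ =>
    have hab : a ≠ b := by simp at h; tauto
    by_cases hea : e = a
    · exact ⟨b, by simp, by rw [hea]; exact hab.symm⟩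
    · exact ⟨a, by simp, fun h' => hea (h'.symm)⟩

/-- The approximate error exponent K̃(G,ρ): the infimum of J̃(ρ_e, ρ_{e′}) over all
non-edges e′ = {u,v} and all edges e on the (unique) path joining u and v, where the
correlation of the non-edge is the product of the edge correlations along that path. -/
noncomputable def Ktilde {V : Type*} (G : SimpleGraph V) (ρ : Sym2 V → ℝ) : ℝ :=
  sInf { x : ℝ | ∃ (u v : V) (p : G.Walk u v), p.IsPath ∧ u ≠ v ∧ ¬ G.Adj u v ∧
    ∃ e ∈ p.edges, x = Jt (ρ e) ((p.edges.map ρ).prod) }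

/-- The star graph on `Fin d`: the vertex with value 0 is the center. -/
def starGraph (d : ℕ) : SimpleGraph (Fin d) where
  Adj u v := u ≠ v ∧ (u.val = 0 ∨ v.val = 0)
  symm := by constructor; intro u v h; exact ⟨h.1.symm, h.2.symm⟩
  loopless := by constructor; intro u h; exact h.1 rfl

/-- The edge correlations induced by an arrangement `π` of the correlation vector `ρ`
on the edges of `G`. -/
noncomputable def arrange {V : Type*} (G : SimpleGraph V) {n : ℕ}
    (π : G.edgeSet ≃ Fin n) (ρ : Fin n → ℝ) : Sym2 V → ℝ := fun e =>
  letI := Classical.dec (e ∈ G.edgeSet)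
  if h : e ∈ G.edgeSet then ρ (π ⟨e, h⟩) else 0

lemma arrange_eq {V : Type*} (G : SimpleGraph V) {n : ℕ} (π : G.edgeSet ≃ Fin n)
    (ρ : Fin n → ℝ) (e : Sym2 V) (he : e ∈ G.edgeSet) :
    arrange G π ρ e = ρ (π ⟨e, he⟩) := by
  unfold arrange
  exact dif_pos he

lemma decomp {V : Type*} (G : SimpleGraph V) {n : ℕ} (π : G.edgeSet ≃ Fin n)
    (ρ : Fin n → ℝ) (hρ : ∀ i, ρ i ∈ Set.Ioo (-1 : ℝ) 1 ∧ ρ i ≠ 0) {x : ℝ}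
    (hx : x ∈ { x : ℝ | ∃ (u v : V) (p : G.Walk u v), p.IsPath ∧ u ≠ v ∧ ¬ G.Adj u v ∧
      ∃ e ∈ p.edges, x = Jt ((arrange G π ρ) e) ((p.edges.map (arrange G π ρ)).prod) }) :
    ∃ i j : Fin n, i ≠ j ∧ ∃ b : ℝ, b ≠ 0 ∧ b^2 ≤ (ρ i)^2 * (ρ j)^2 ∧ x = Jt (ρ i) b := by
  classical
  obtain ⟨u, v, p, hp, huv, hnadj, e, he, hxeq⟩ := hx
  set ρ' := arrange G π ρ with hρ'
  -- the walk has length at least 2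
  have hlen : 2 ≤ p.length := by
    rcases Nat.lt_or_ge p.length 2 with h | h
    · interval_cases h' : p.length
      · exact absurd (SimpleGraph.Walk.eq_of_length_eq_zero h') huv
      · exact absurd (SimpleGraph.Walk.adj_of_length_eq_one h') hnadj
    · exact h
  have hlen' : 2 ≤ p.edges.length := by rw [SimpleGraph.Walk.length_edges]; exact hlen
  obtain ⟨f, hf, hfe⟩ := exists_ne_mem_of_nodup p.edges hp.edges_nodup hlen' he
  have heE : e ∈ G.edgeSet := p.edges_subset_edgeSet he
  have hfE : f ∈ G.edgeSet := p.edges_subset_edgeSet hf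
  refine ⟨π ⟨e, heE⟩, π ⟨f, hfE⟩, ?_, (p.edges.map ρ').prod, ?_, ?_, ?_⟩
  · intro hij
    have := π.injective hij
    exact hfe (congrArg Subtype.val this).symm
  all_goals (
    have hperm : p.edges.Perm (e :: f :: ((p.edges.erase e).erase f)) := by
      have h1 : p.edges.Perm (e :: p.edges.erase e) := List.perm_cons_erase he
      have hf' : f ∈ p.edges.erase e := (List.mem_erase_of_ne hfe).2 hf
      exact h1.trans ((List.perm_cons_erase hf').cons e)
    have hprod : (p.edges.map ρ').prod
        = ρ' e * (ρ' f * (((p.edges.erase e).erase f).map ρ').prod) := by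
      rw [(hperm.map ρ').prod_eq]; simp
    have hrest := list_prod_bound (((p.edges.erase e).erase f).map ρ') (by
      intro z hz
      obtain ⟨w, hw, rfl⟩ := List.mem_map.1 hz
      have hwE : w ∈ G.edgeSet := p.edges_subset_edgeSet
        (List.mem_of_mem_erase (List.mem_of_mem_erase hw))
      rw [hρ', arrange_eq G π ρ w hwE]
      obtain ⟨⟨hl, hr⟩, hz0⟩ := hρ (π ⟨w, hwE⟩)
      exact ⟨abs_le.2 ⟨by linarith, by linarith⟩, hz0⟩))
  · -- prod ≠ 0
    rw [hprod]
    have he0 : ρ' e ≠ 0 := by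
      rw [hρ', arrange_eq G π ρ e heE]; exact (hρ _).2
    have hf0 : ρ' f ≠ 0 := by
      rw [hρ', arrange_eq G π ρ f hfE]; exact (hρ _).2
    exact mul_ne_zero he0 (mul_ne_zero hf0 hrest.2)
  · -- bound
    rw [hprod, hρ', arrange_eq G π ρ e heE, arrange_eq G π ρ f hfE]
    set r := (((p.edges.erase e).erase f).map (arrange G π ρ)).prod
    have h1 : |r| ≤ 1 := hrest.1
    have h2 : r^2 ≤ 1 := by nlinarith [abs_nonneg r, sq_abs r]
    nlinarith [sq_nonneg (ρ (π ⟨e, heE⟩) * ρ (π ⟨f, hfE⟩)), sq_abs r]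
  · rw [hxeq, hρ', arrange_eq G π ρ e heE]

lemma star_edge (d : ℕ) (hd : 0 < d) (e : Sym2 (Fin d)) (he : e ∈ (starGraph d).edgeSet) :
    ∃ w : Fin d, w ≠ ⟨0, hd⟩ ∧ e = s(⟨0, hd⟩, w) := by
  induction e with
  | _ u v =>
    rw [SimpleGraph.mem_edgeSet] at he
    obtain ⟨huv, h0⟩ := he
    rcases h0 with h | h
    · have hu : u = ⟨0, hd⟩ := Fin.ext h
      exact ⟨v, by rw [← hu]; exact huv.symm, by rw [hu]⟩
    · have hv : v = ⟨0, hd⟩ := Fin.ext h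
      exact ⟨u, by rw [← hv]; exact huv, by rw [hv, Sym2.eq_swap]⟩

lemma star_mem (d : ℕ) (hd : 4 ≤ d) {n : ℕ} (σ : (starGraph d).edgeSet ≃ Fin n)
    (ρ : Fin n → ℝ) (i j : Fin n) (hij : i ≠ j) :
    Jt (ρ i) (ρ i * ρ j) ∈ { x : ℝ | ∃ (u v : Fin d) (p : (starGraph d).Walk u v),
      p.IsPath ∧ u ≠ v ∧ ¬ (starGraph d).Adj u v ∧
      ∃ e ∈ p.edges, x = Jt ((arrange (starGraph d) σ ρ) e)
        ((p.edges.map (arrange (starGraph d) σ ρ)).prod) } := by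
  have hd0 : 0 < d := by omega
  set z : Fin d := ⟨0, hd0⟩ with hz
  obtain ⟨w₁, hw₁, he₁⟩ := star_edge d hd0 (σ.symm i).1 (σ.symm i).2
  obtain ⟨w₂, hw₂, he₂⟩ := star_edge d hd0 (σ.symm j).1 (σ.symm j).2
  have hw12 : w₁ ≠ w₂ := by
    intro h
    apply hij
    have : σ.symm i = σ.symm j := Subtype.ext (by rw [he₁, he₂, h])
    have := congrArg σ this
    rwa [Equiv.apply_symm_apply, Equiv.apply_symm_apply] at this
  have h₁ : (starGraph d).Adj w₁ z := ⟨hw₁, Or.inr rfl⟩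
  have h₂ : (starGraph d).Adj z w₂ := ⟨fun h => hw₂ h.symm, Or.inl rfl⟩
  refine ⟨w₁, w₂, SimpleGraph.Walk.cons h₁ (SimpleGraph.Walk.cons h₂ SimpleGraph.Walk.nil),
    ?_, hw12, ?_, s(w₁, z), ?_, ?_⟩
  · rw [SimpleGraph.Walk.isPath_def]
    simp [hw₁, hw12, Ne.symm hw₂]
    exact ⟨hw₁, fun h => hw₂ h.symm⟩
  · rintro ⟨-, h | h⟩
    · exact hw₁ (Fin.ext h)
    · exact hw₂ (Fin.ext h)
  · simp
  · have hm₁ : s(w₁, z) ∈ (starGraph d).edgeSet := ((starGraph d).mem_edgeSet).2 h₁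
    have hm₂ : s(z, w₂) ∈ (starGraph d).edgeSet := ((starGraph d).mem_edgeSet).2 h₂
    have hv₁ : arrange (starGraph d) σ ρ s(w₁, z) = ρ i := by
      rw [arrange_eq _ σ ρ _ hm₁]
      have : (⟨s(w₁, z), hm₁⟩ : (starGraph d).edgeSet) = σ.symm i :=
        Subtype.ext (by rw [he₁]; exact Sym2.eq_swap)
      rw [this, Equiv.apply_symm_apply]
    have hv₂ : arrange (starGraph d) σ ρ s(z, w₂) = ρ j := by
      rw [arrange_eq _ σ ρ _ hm₂]
      have : (⟨s(z, w₂), hm₂⟩ : (starGraph d).edgeSet) = σ.symm j :=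
        Subtype.ext (by rw [he₂])
      rw [this, Equiv.apply_symm_apply]
    simp only [SimpleGraph.Walk.edges_cons, SimpleGraph.Walk.edges_nil, List.map_cons,
      List.map_nil, List.prod_cons, List.prod_nil, hv₁, hv₂]
    rw [mul_one]


lemma exists_adj_of_edge {V : Type*} (G : SimpleGraph V) {e : Sym2 V} (he : e ∈ G.edgeSet) :
    ∃ a b, G.Adj a b := by
  induction e with
  | _ a b => exact ⟨a, b, he⟩

lemma tree_exists_nonadj (d : ℕ) (hd : 4 ≤ d) (T : SimpleGraph (Fin d)) (hT : T.IsTree)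
    (hne : T.edgeSet.Nonempty) :
    ∃ u v : Fin d, u ≠ v ∧ ¬ T.Adj u v := by
  obtain ⟨e, he⟩ := hne
  obtain ⟨a, b, hab⟩ := exists_adj_of_edge T he
  obtain ⟨k, hk, hka, hkb⟩ : ∃ k, k < d ∧ k ≠ a.val ∧ k ≠ b.val := by
    rcases eq_or_ne a.val 0 with h0 | h0
    · rcases eq_or_ne b.val 1 with h1 | h1
      · exact ⟨2, by omega, by omega, by omega⟩
      · exact ⟨1, by omega, by omega, by omega⟩
    · rcases eq_or_ne b.val 0 with h1 | h1
      · rcases eq_or_ne a.val 1 with h2 | h2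
        · exact ⟨2, by omega, by omega, by omega⟩
        · exact ⟨1, by omega, by omega, by omega⟩
      · exact ⟨0, by omega, by omega, by omega⟩
  set c : Fin d := ⟨k, hk⟩ with hc
  have hca : c ≠ a := fun h => hka (congrArg Fin.val h)
  have hcb : c ≠ b := fun h => hkb (congrArg Fin.val h)
  by_cases hac : T.Adj a c
  · by_cases hbc : T.Adj b c
    · exfalso
      have huniq := SimpleGraph.isAcyclic_iff_path_unique.1 hT.IsAcyclic
      have hp₂ : (SimpleGraph.Walk.cons hac
          (SimpleGraph.Walk.cons hbc.symm SimpleGraph.Walk.nil)).IsPath := by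
        rw [SimpleGraph.Walk.isPath_def]
        simp [hac.ne, hab.ne, hcb]
      have := huniq (SimpleGraph.Path.singleton hab) ⟨_, hp₂⟩
      have hlen := congrArg (fun q : T.Path a b => q.val.length) this
      simp [SimpleGraph.Path.singleton] at hlen
    · exact ⟨b, c, hcb.symm, hbc⟩
  · exact ⟨a, c, hca.symm, hac⟩

/-- The star minimizes the approximate error exponent among all trees on d ≥ 4 vertices,
for any fixed vector of correlation coefficients and any arrangements. -/
theorem star_minimizes (d : ℕ) (hd : 4 ≤ d) (ρ : Fin (d - 1) → ℝ)
    (hρ : ∀ i, ρ i ∈ Set.Ioo (-1 : ℝ) 1 ∧ ρ i ≠ 0)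
    (T : SimpleGraph (Fin d)) (hT : T.IsTree)
    (π : T.edgeSet ≃ Fin (d - 1)) (σ : (starGraph d).edgeSet ≃ Fin (d - 1)) :
    Ktilde (starGraph d) (arrange (starGraph d) σ ρ) ≤ Ktilde T (arrange T π ρ) := by
  classical
  have hsq : ∀ i : Fin (d-1), 0 < (ρ i)^2 ∧ (ρ i)^2 < 1 := by
    intro i
    obtain ⟨⟨h1, h2⟩, h3⟩ := hρ i
    exact ⟨lt_of_le_of_ne (sq_nonneg _) (Ne.symm (pow_ne_zero 2 h3)), by nlinarith⟩
  unfold Ktilde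
  have hbdd : BddBelow { x : ℝ | ∃ (u v : Fin d) (p : (starGraph d).Walk u v),
      p.IsPath ∧ u ≠ v ∧ ¬ (starGraph d).Adj u v ∧
      ∃ e ∈ p.edges, x = Jt ((arrange (starGraph d) σ ρ) e)
        ((p.edges.map (arrange (starGraph d) σ ρ)).prod) } := by
    refine ⟨0, fun y hy => ?_⟩
    obtain ⟨i, j, hij, bb, h0, hle, rfl⟩ := decomp (starGraph d) σ ρ hρ hy
    have hbb2 : 0 < bb^2 := lt_of_le_of_ne (sq_nonneg bb) (Ne.symm (pow_ne_zero 2 h0))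
    exact Jt_nonneg (ρ i) bb
      (by nlinarith [(hsq i).1, (hsq i).2, (hsq j).1, (hsq j).2]) (hsq i).2 hbb2
  have hSTne : Set.Nonempty { x : ℝ | ∃ (u v : Fin d) (p : T.Walk u v),
      p.IsPath ∧ u ≠ v ∧ ¬ T.Adj u v ∧
      ∃ e ∈ p.edges, x = Jt ((arrange T π ρ) e) ((p.edges.map (arrange T π ρ)).prod) } := by
    obtain ⟨u, v, huv, hnadj⟩ := tree_exists_nonadj d hd T hT
      ⟨(π.symm ⟨0, by omega⟩).1, (π.symm ⟨0, by omega⟩).2⟩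
    obtain ⟨w⟩ := hT.isConnected.preconnected u v
    have hlen0 : w.toPath.1.length ≠ 0 :=
      fun h => huv (SimpleGraph.Walk.eq_of_length_eq_zero h)
    have hel : 0 < w.toPath.1.edges.length := by
      rw [SimpleGraph.Walk.length_edges]; omega
    exact ⟨_, u, v, w.toPath.1, w.toPath.2, huv, hnadj,
      w.toPath.1.edges.get ⟨0, hel⟩, w.toPath.1.edges.get_mem _, rfl⟩
  refine le_csInf hSTne ?_
  intro b hb
  obtain ⟨i, j, hij, bb, h0, hle, rfl⟩ := decomp T π ρ hρ hb
  have hbb2 : 0 < bb^2 := lt_of_le_of_ne (sq_nonneg bb) (Ne.symm (pow_ne_zero 2 h0))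
  refine le_trans (csInf_le hbdd (star_mem d hd σ ρ i j hij)) ?_
  apply Jt_anti (ρ i) (ρ i * ρ j) bb hbb2
  · rw [mul_pow]; exact hle
  · rw [mul_pow]; nlinarith [(hsq i).1, (hsq i).2, (hsq j).1, (hsq j).2]
  · exact (hsq i).2
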